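/- Let X be a Banach space, M and N closed subspaces of X with closure(M + N) = X, S : X → X a bounded linear operator with S² = I, and C > 0 a constant such that ‖x + Sx‖ ≥ C‖x‖ for all x ∈ M, and S(M) = N. Then M and N have a common complement in X, namely the eigenspace K = {x ∈ X : Sx = −x}. -/

import Mathlib

theorem stmt_16 {X : Type*} [NormedAddCommGroup X] [NormedSpace ℝ X] [CompleteSpace X]
    (M N : Submodule ℝ X) (hM : IsClosed (M : Set X)) (hN : IsClosed (N : Set X))
    (hdense : Dense ((M ⊔ N : Submodule ℝ X) : Set X))
    (S : X →L[ℝ] X) (hS : S ∘L S = ContinuousLinearMap.id ℝ X)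
    (hSMN : Submodule.map (S : X →ₗ[ℝ] X) M = N)
    (C : ℝ) (hC : 0 < C) (hbound : ∀ x ∈ M, C * ‖x‖ ≤ ‖x + S x‖) :
    IsClosed ((LinearMap.ker ((ContinuousLinearMap.id ℝ X + S : X →L[ℝ] X) : X →ₗ[ℝ] X) : Submodule ℝ X) : Set X) ∧
      M ⊓ LinearMap.ker ((ContinuousLinearMap.id ℝ X + S : X →L[ℝ] X) : X →ₗ[ℝ] X) = ⊥ ∧
      M ⊔ LinearMap.ker ((ContinuousLinearMap.id ℝ X + S : X →L[ℝ] X) : X →ₗ[ℝ] X) = ⊤ ∧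
      N ⊓ LinearMap.ker ((ContinuousLinearMap.id ℝ X + S : X →L[ℝ] X) : X →ₗ[ℝ] X) = ⊥ ∧
      N ⊔ LinearMap.ker ((ContinuousLinearMap.id ℝ X + S : X →L[ℝ] X) : X →ₗ[ℝ] X) = ⊤ := by
  set A : X →L[ℝ] X := ContinuousLinearMap.id ℝ X + S with hA
  have hSS : ∀ x, S (S x) = x := fun x => by
    simpa using ContinuousLinearMap.ext_iff.mp hS x
  have hAdef : ∀ x, A x = x + S x := fun x => rfl
  have hAS : ∀ x, A (S x) = A x := fun x => by
    simp [hAdef, hSS x, add_comm]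
  -- kernel is closed
  have hKclosed : IsClosed ((LinearMap.ker (A : X →ₗ[ℝ] X) : Submodule ℝ X) : Set X) :=
    ContinuousLinearMap.isClosed_ker A
  -- M ⊓ ker A = ⊥
  have hMK : M ⊓ LinearMap.ker (A : X →ₗ[ℝ] X) = ⊥ := by
    rw [Submodule.eq_bot_iff]
    rintro x ⟨hxM, hxK⟩
    have h0 : A x = 0 := hxK
    have := hbound x hxM
    rw [← hAdef x, h0, norm_zero] at this
    have : ‖x‖ ≤ 0 := by nlinarith [norm_nonneg x]
    simpa [norm_le_zero_iff] using this
  -- A(M) is closed: A restricted to M is antilipschitz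
  haveI : CompleteSpace M := hM.completeSpace_coe
  have hAMclosed : IsClosed ((Submodule.map (A : X →ₗ[ℝ] X) M : Submodule ℝ X) : Set X) := by
    set f : M →L[ℝ] X := A.comp (Submodule.subtypeL M) with hf
    have hanti : AntilipschitzWith ⟨C⁻¹, by positivity⟩ f := by
      apply ContinuousLinearMap.antilipschitz_of_bound
      intro m
      have h1 := hbound m.1 m.2
      have h2 : ‖f m‖ = ‖(m : X) + S m‖ := by simp [hf, hAdef]
      rw [h2]
      change ‖m‖ ≤ C⁻¹ * ‖(m : X) + S m‖
      rw [inv_mul_eq_div, le_div_iff₀ hC, mul_comm]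
      exact h1
    have hrange : Set.range f = ((Submodule.map (A : X →ₗ[ℝ] X) M : Submodule ℝ X) : Set X) := by
      ext y
      simp only [Set.mem_range, Submodule.map_coe, Set.mem_image, SetLike.mem_coe]
      constructor
      · rintro ⟨m, rfl⟩; exact ⟨m.1, m.2, rfl⟩
      · rintro ⟨x, hx, rfl⟩; exact ⟨⟨x, hx⟩, rfl⟩
    have := hanti.isClosed_range f.uniformContinuous
    rwa [hrange] at this
  -- image of everything under A lands in A(M)
  have hsub : ∀ x : X, A x ∈ Submodule.map (A : X →ₗ[ℝ] X) M := by
    have hle : Submodule.map (A : X →ₗ[ℝ] X) (M ⊔ N) ≤ Submodule.map (A : X →ₗ[ℝ] X) M := by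
      rw [Submodule.map_sup]
      apply sup_le le_rfl
      rw [← hSMN]
      rintro y ⟨z, ⟨m, hm, rfl⟩, rfl⟩
      exact ⟨m, hm, (hAS m).symm⟩
    intro x
    have hx : x ∈ closure ((M ⊔ N : Submodule ℝ X) : Set X) := by
      rw [hdense.closure_eq]; trivial
    have h1 : A x ∈ A '' closure ((M ⊔ N : Submodule ℝ X) : Set X) := ⟨x, hx, rfl⟩
    have h2 : A '' closure ((M ⊔ N : Submodule ℝ X) : Set X) ⊆
        closure (A '' ((M ⊔ N : Submodule ℝ X) : Set X)) :=
      image_closure_subset_closure_image A.continuous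
    have h3 : closure (A '' ((M ⊔ N : Submodule ℝ X) : Set X)) ⊆
        ((Submodule.map (A : X →ₗ[ℝ] X) M : Submodule ℝ X) : Set X) := by
      apply closure_minimal _ hAMclosed
      intro y hy; obtain ⟨z, hz, rfl⟩ := hy; exact hle ⟨z, hz, rfl⟩
    exact h3 (h2 h1)
  -- M ⊔ ker A = ⊤
  have hMsup : M ⊔ LinearMap.ker (A : X →ₗ[ℝ] X) = ⊤ := by
    rw [eq_top_iff]
    intro x _
    obtain ⟨m, hm, hAm⟩ := hsub x
    refine Submodule.mem_sup.mpr ⟨m, hm, x - m, ?_, by abel⟩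
    simp only [LinearMap.mem_ker]
    show A (x - m) = 0
    rw [map_sub]; exact sub_eq_zero.mpr hAm.symm
  -- N ⊓ ker A = ⊥
  have hNK : N ⊓ LinearMap.ker (A : X →ₗ[ℝ] X) = ⊥ := by
    rw [Submodule.eq_bot_iff]
    rintro x ⟨hxN, hxK⟩
    rw [← hSMN] at hxN
    obtain ⟨m, hm, rfl⟩ := hxN
    have h0 : A (S m) = 0 := hxK
    rw [hAS m] at h0
    have hm0 : m = 0 := by
      have := Submodule.eq_bot_iff _ |>.mp hMK m ⟨hm, h0⟩
      exact this
    rw [hm0, map_zero]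
  -- N ⊔ ker A = ⊤
  have hNsup : N ⊔ LinearMap.ker (A : X →ₗ[ℝ] X) = ⊤ := by
    rw [eq_top_iff]
    intro x _
    obtain ⟨m, hm, hAm⟩ := hsub x
    refine Submodule.mem_sup.mpr ⟨S m, ?_, x - S m, ?_, by abel⟩
    · rw [← hSMN]; exact ⟨m, hm, rfl⟩
    · simp only [LinearMap.mem_ker]
      show A (x - S m) = 0
      rw [map_sub, hAS m]; exact sub_eq_zero.mpr hAm.symm
  exact ⟨hKclosed, hMK, hMsup, hNK, hNsup⟩
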